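/- arXiv:2008.04772 — 2 statements merged into one kernel-verified Lean document; each statement's English description precedes it below -/
import Mathlib

section
/- Let X be a complex Banach space and let S, C : X →L[ℂ] X satisfy the Calderón identities S∘S = -(1/4)•id + C∘C and C∘S + S∘C = 0, and let α ∈ ℂ be nonzero. Then the PMCHWT-type block operator A_α on X × X (defined by A_α(u,v) = (C u + α • S v, -(α⁻¹) • S u + C v)) is invertible with inverse 4 • A_α, and its spectrum is contained in the two-point set {1/2, -1/2}. -/
/-- Under the Calderón identities, the PMCHWT-type block operator
`A (u, v) = (C u + α • S v, -(α⁻¹) • S u + C v)` is invertible with inverse `4 • A`,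
and its spectrum is contained in `{1/2, -1/2}`. -/
theorem pmchwt_block_invertible_and_spectrum
    (X : Type*) [NormedAddCommGroup X] [NormedSpace ℂ X] [CompleteSpace X]
    (S C : X →L[ℂ] X)
    (hS : S.comp S = -(1/4 : ℂ) • ContinuousLinearMap.id ℂ X + C.comp C)
    (hC : C.comp S + S.comp C = 0)
    (α : ℂ) (hα : α ≠ 0)
    (A : (X × X) →L[ℂ] (X × X))
    (hA : ∀ u v : X, A (u, v) = (C u + α • S v, -(α⁻¹) • S u + C v)) :
    A.comp ((4 : ℂ) • A) = ContinuousLinearMap.id ℂ (X × X) ∧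
    ((4 : ℂ) • A).comp A = ContinuousLinearMap.id ℂ (X × X) ∧
    spectrum ℂ A ⊆ {(1/2 : ℂ), -(1/2 : ℂ)} := by
  have hS' : ∀ u, S (S u) = -(1/4:ℂ) • u + C (C u) := fun u => by
    have := ContinuousLinearMap.ext_iff.mp hS u; simpa using this
  have hC' : ∀ u, C (S u) = - S (C u) := fun u => by
    have := ContinuousLinearMap.ext_iff.mp hC u
    simp only [ContinuousLinearMap.add_apply, ContinuousLinearMap.comp_apply,
      ContinuousLinearMap.zero_apply] at this
    exact eq_neg_of_add_eq_zero_left this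
  have hinv : α * α⁻¹ = 1 := mul_inv_cancel₀ hα
  have key : ∀ x : X × X, A (A x) = (1/4:ℂ) • x := by
    rintro ⟨u, v⟩
    rw [hA, hA]
    simp only [map_add, map_smul, map_neg, hS', hC', Prod.smul_mk]
    rw [Prod.mk.injEq]
    constructor <;>
    · simp only [smul_add, smul_neg, smul_smul, hinv, neg_smul, one_smul, neg_neg]
      abel_nf
      match_scalars <;> field_simp <;> simp only [neg_smul, one_smul, smul_eq_mul] <;> simp [hα]
  have hAA : A.comp A = (1/4:ℂ) • ContinuousLinearMap.id ℂ (X × X) := by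
    exact ContinuousLinearMap.ext fun x => by simpa using key x
  have hmul : A * A = (1/4:ℂ) • (1 : (X × X) →L[ℂ] (X × X)) := hAA
  refine ⟨?_, ?_, ?_⟩
  · show A.comp ((4:ℂ) • A) = _
    rw [ContinuousLinearMap.comp_smul, hAA, smul_smul]
    norm_num
  · rw [ContinuousLinearMap.smul_comp, hAA, smul_smul]
    norm_num
  · intro l hl
    by_contra hmem
    simp only [Set.mem_insert_iff, Set.mem_singleton_iff, not_or] at hmem
    obtain ⟨h1, h2⟩ := hmem
    have hne : l^2 - 1/4 ≠ 0 := by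
      intro h
      rcases mul_eq_zero.mp (show (l - 1/2) * (l + 1/2) = 0 by linear_combination h) with h' | h'
      · exact h1 (by linear_combination h')
      · exact h2 (by linear_combination h')
    have P : ((l • 1 - A) * (l • 1 + A) : (X × X) →L[ℂ] (X × X)) = (l^2 - 1/4) • 1 := by
      simp only [mul_add, sub_mul, smul_mul_assoc, mul_smul_comm, one_mul, mul_one, hmul,
        smul_smul]
      module
    have P' : ((l • 1 + A) * (l • 1 - A) : (X × X) →L[ℂ] (X × X)) = (l^2 - 1/4) • 1 := by
      simp only [mul_sub, add_mul, smul_mul_assoc, mul_smul_comm, one_mul, mul_one, hmul,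
        smul_smul]
      module
    have hu : IsUnit ((algebraMap ℂ ((X × X) →L[ℂ] (X × X))) l - A) := by
      rw [Algebra.algebraMap_eq_smul_one]
      refine ⟨⟨l • 1 - A, (l^2 - 1/4)⁻¹ • (l • 1 + A), ?_, ?_⟩, rfl⟩
      · rw [mul_smul_comm, P, smul_smul, inv_mul_cancel₀ hne, one_smul]
      · rw [smul_mul_assoc, P', smul_smul, inv_mul_cancel₀ hne, one_smul]
    exact spectrum.notMem_iff.mpr hu hl
end

section
/- Let X be a complex Banach space and let S, C : X →L[ℂ] X satisfy the Calderón identities S∘S = -(1/4)•id + C∘C and C∘S + S∘C = 0, and suppose in addition that C is a compact operator. Then for every nonzero α ∈ ℂ, the reduced (electric-field-only) block operator B_α on X × X defined by B_α(u,v) = (α • S v, -(α⁻¹) • S u) satisfies: B_α ∘ B_α - (1/4)•id is a compact operator on X × X. -/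
/-- Under the Calderón identities with `C` compact, the reduced
(electric-field-only) block operator `B (u, v) = (α • S v, -(α⁻¹) • S u)` satisfies
that `B ∘ B - (1/4) • id` is a compact operator on `X × X`. -/
theorem reduced_block_square_compact_perturbation
    (X : Type*) [NormedAddCommGroup X] [NormedSpace ℂ X] [CompleteSpace X]
    (S C : X →L[ℂ] X)
    (hS : S.comp S = -(1/4 : ℂ) • ContinuousLinearMap.id ℂ X + C.comp C)
    (hC : C.comp S + S.comp C = 0)
    (hCcompact : IsCompactOperator (⇑C))
    (α : ℂ) (hα : α ≠ 0)
    (B : (X × X) →L[ℂ] (X × X))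
    (hB : ∀ u v : X, B (u, v) = (α • S v, -(α⁻¹) • S u)) :
    IsCompactOperator (⇑(B.comp B - (1/4 : ℂ) • ContinuousLinearMap.id ℂ (X × X))) := by
  set D : X →L[ℂ] X := -(C.comp C) with hD
  have hDc : IsCompactOperator (⇑D) := by
    have h1 : IsCompactOperator (⇑(C.comp C)) := hCcompact.clm_comp C
    simpa [hD] using h1.neg
  -- the operator equals p ↦ (D p.1, D p.2)
  have key : ⇑(B.comp B - (1/4 : ℂ) • ContinuousLinearMap.id ℂ (X × X)) =
      (fun p : X × X => ((ContinuousLinearMap.inl ℂ X X).comp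
        (D.comp (ContinuousLinearMap.fst ℂ X X)) p)) +
      (fun p : X × X => ((ContinuousLinearMap.inr ℂ X X).comp
        (D.comp (ContinuousLinearMap.snd ℂ X X)) p)) := by
    funext p
    obtain ⟨u, v⟩ := p
    have hSS : ∀ x : X, S (S x) = -(1/4 : ℂ) • x + C (C x) := by
      intro x
      have := congrArg (fun T : X →L[ℂ] X => T x) hS
      simpa using this
    have hBB : B (B (u, v)) = (-(S (S u)), -(S (S v))) := by
      rw [hB, hB]
      simp [Prod.ext_iff, smul_smul, mul_inv_cancel₀ hα, inv_mul_cancel₀ hα, neg_smul]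
    simp only [ContinuousLinearMap.sub_apply, ContinuousLinearMap.comp_apply, hBB,
      ContinuousLinearMap.smul_apply, ContinuousLinearMap.id_apply, Pi.add_apply,
      ContinuousLinearMap.inl_apply, ContinuousLinearMap.inr_apply,
      ContinuousLinearMap.coe_fst', ContinuousLinearMap.coe_snd', hD,
      ContinuousLinearMap.neg_apply]
    rw [hSS, hSS]
    ext <;> simp [Prod.smul_def] <;> abel
  rw [key]
  have h1 : IsCompactOperator (fun p : X × X => ((ContinuousLinearMap.inl ℂ X X).comp
      (D.comp (ContinuousLinearMap.fst ℂ X X)) p)) := by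
    have := ((hDc.comp_clm (ContinuousLinearMap.fst ℂ X X)).clm_comp
      (ContinuousLinearMap.inl ℂ X X))
    simpa [Function.comp_def] using this
  have h2 : IsCompactOperator (fun p : X × X => ((ContinuousLinearMap.inr ℂ X X).comp
      (D.comp (ContinuousLinearMap.snd ℂ X X)) p)) := by
    have := ((hDc.comp_clm (ContinuousLinearMap.snd ℂ X X)).clm_comp
      (ContinuousLinearMap.inr ℂ X X))
    simpa [Function.comp_def] using this
  exact h1.add h2
end
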